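/- Let ε > 0, α > 0, 0 < θ < 1, C₁ ≥ 1. Suppose (z_1,...,z_n) are unimodular complex numbers with |∑_{k=1}^n z_k^ν| ≤ C₁√n for all ν = 1,...,⌊αn²⌋, and let m ~ n^θ. Then there exists a subset M₀ ⊆ {1,...,n} with |M₀| = m such that |∑_{k∈M₀} z_k^ν| ≪_ε m^{1/2+ε} for all ν = 1,...,⌊αn²⌋. -/

import Mathlib

open Finset Filter

set_option maxHeartbeats 1000000


lemma indep_prod {R : Type*} [CommRing R] {n : ℕ} (p : R) (D : Finset (Fin n))
    (g h : Fin n → R) :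
    ∑ S : Finset (Fin n), (∏ k : Fin n, if k ∈ S then p else 1 - p) *
      ∏ j ∈ D, (if j ∈ S then g j else h j)
    = ∏ j ∈ D, (p * g j + (1 - p) * h j) := by
  classical
  have key : ∏ k : Fin n, (p * (if k ∈ D then g k else 1) + (1 - p) * (if k ∈ D then h k else 1))
      = ∑ S ∈ (univ : Finset (Fin n)).powerset,
        (∏ k ∈ S, p * (if k ∈ D then g k else 1)) *
        ∏ k ∈ univ \ S, (1 - p) * (if k ∈ D then h k else 1) :=
    Finset.prod_add _ _ _
  have rhs : ∏ j ∈ D, (p * g j + (1 - p) * h j)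
      = ∏ k : Fin n, (p * (if k ∈ D then g k else 1) + (1 - p) * (if k ∈ D then h k else 1)) := by
    rw [← Finset.prod_subset (Finset.subset_univ D)]
    · exact Finset.prod_congr rfl (fun j hj => by simp [hj])
    · intro k _ hk; simp [hk]
  rw [rhs, key, Finset.powerset_univ]
  refine Finset.sum_congr rfl (fun S _ => ?_)
  rw [Finset.prod_mul_distrib, Finset.prod_mul_distrib]
  have e1 : (∏ k ∈ S, (if k ∈ D then g k else 1)) = ∏ k ∈ S.filter (· ∈ D), g k := by
    rw [Finset.prod_filter]
  have e2 : (∏ k ∈ univ \ S, (if k ∈ D then h k else 1)) = ∏ k ∈ (univ \ S).filter (· ∈ D), h k := by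
    rw [Finset.prod_filter]
  have e3 : (∏ j ∈ D, (if j ∈ S then g j else h j))
      = (∏ j ∈ D.filter (· ∈ S), g j) * ∏ j ∈ D.filter (fun j => ¬ j ∈ S), h j :=
    Finset.prod_ite _ _
  have e4 : S.filter (· ∈ D) = D.filter (· ∈ S) := by ext j; simp [and_comm]
  have e5 : (univ \ S).filter (· ∈ D) = D.filter (fun j => ¬ j ∈ S) := by ext j; simp [and_comm]
  have e6 : (∏ k : Fin n, if k ∈ S then p else 1 - p)
      = (∏ _k ∈ S, p) * ∏ _k ∈ univ \ S, (1 - p) := by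
    rw [Finset.prod_ite (s := (univ : Finset (Fin n))) (fun _ => p) (fun _ => 1 - p)]
    congr 1
    · congr 1; ext j; simp
    · congr 1; ext j; simp
  rw [e1, e2, e3, e4, e5, e6]
  ring


lemma count_le {n N : ℕ} (q : ℝ) (hq : 0 ≤ q) (hqn : 1 ≤ q * n) :
    ∑ τ : (Fin N ⊕ Fin N) → Fin n,
      (if (Finset.image τ Finset.univ).card ≤ N then q ^ (Finset.image τ Finset.univ).card else 0)
    ≤ (N+1) * (N:ℝ)^(2*N) * (q * n)^N := by
  classical
  set F : ((Fin N ⊕ Fin N) → Fin n) → ℝ :=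
    fun τ => if (Finset.image τ Finset.univ).card ≤ N then q ^ (Finset.image τ Finset.univ).card else 0 with hF
  have h1 : ∑ τ, F τ = ∑ s : Finset (Fin n),
      ∑ τ ∈ univ.filter (fun τ => Finset.image τ Finset.univ = s), F τ :=
    (Finset.sum_fiberwise univ (fun τ => Finset.image τ Finset.univ) F).symm
  rw [h1]
  have h2 : ∀ s : Finset (Fin n),
      (∑ τ ∈ univ.filter (fun τ => Finset.image τ Finset.univ = s), F τ)
      ≤ ((s.card : ℝ) ^ (2*N)) * (if s.card ≤ N then q ^ s.card else 0) := by
    intro s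
    have hmem : ∀ τ ∈ univ.filter (fun τ => Finset.image τ Finset.univ = s),
        F τ = (if s.card ≤ N then q ^ s.card else 0) := by
      intro τ hτ
      rw [Finset.mem_filter] at hτ
      simp [hF, hτ.2]
    rw [Finset.sum_congr rfl hmem]
    simp only [Finset.sum_const, nsmul_eq_mul]
    have hcard : ((univ : Finset ((Fin N ⊕ Fin N) → Fin n)).filter (fun τ => Finset.image τ Finset.univ = s)).card ≤ s.card ^ (2*N) := by
      have hsub : (univ : Finset ((Fin N ⊕ Fin N) → Fin n)).filter (fun τ => Finset.image τ Finset.univ = s)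
          ⊆ Fintype.piFinset (fun _ : Fin N ⊕ Fin N => s) := by
        intro τ hτ
        rw [Finset.mem_filter] at hτ
        rw [Fintype.mem_piFinset]
        intro i
        rw [← hτ.2]
        exact Finset.mem_image_of_mem τ (mem_univ i)
      calc ((univ : Finset ((Fin N ⊕ Fin N) → Fin n)).filter (fun τ => Finset.image τ Finset.univ = s)).card
          ≤ (Fintype.piFinset (fun _ : Fin N ⊕ Fin N => s)).card := Finset.card_le_card hsub
        _ = ∏ _i : Fin N ⊕ Fin N, s.card := Fintype.card_piFinset _
        _ = s.card ^ (2*N) := by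
            rw [Finset.prod_const, Finset.card_univ, Fintype.card_sum, Fintype.card_fin]
            ring_nf
    have hite : (0:ℝ) ≤ (if s.card ≤ N then q ^ s.card else 0) := by positivity
    have : (((univ : Finset ((Fin N ⊕ Fin N) → Fin n)).filter (fun τ => Finset.image τ Finset.univ = s)).card : ℝ)
        ≤ ((s.card : ℝ)) ^ (2*N) := by exact_mod_cast hcard
    exact mul_le_mul_of_nonneg_right this hite
  calc ∑ s : Finset (Fin n), ∑ τ ∈ univ.filter (fun τ => Finset.image τ Finset.univ = s), F τ
      ≤ ∑ s : Finset (Fin n), ((s.card : ℝ) ^ (2*N)) * (if s.card ≤ N then q ^ s.card else 0) :=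
        Finset.sum_le_sum (fun s _ => h2 s)
    _ ≤ (N+1) * (N:ℝ)^(2*N) * (q * n)^N := ?_
  rw [← Finset.powerset_univ, Finset.sum_powerset]
  have h3 : ∀ d ∈ Finset.range ((univ : Finset (Fin n)).card + 1),
      (∑ s ∈ Finset.powersetCard d (univ : Finset (Fin n)),
        ((s.card : ℝ) ^ (2*N)) * (if s.card ≤ N then q ^ s.card else 0))
      ≤ (if d ≤ N then ((N:ℝ)^(2*N) * (q*n)^N) else 0) := by
    intro d _
    have hmem : ∀ s ∈ Finset.powersetCard d (univ : Finset (Fin n)),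
        ((s.card : ℝ) ^ (2*N)) * (if s.card ≤ N then q ^ s.card else 0)
        = ((d : ℝ) ^ (2*N)) * (if d ≤ N then q ^ d else 0) := by
      intro s hs
      rw [(Finset.mem_powersetCard.mp hs).2]
    rw [Finset.sum_congr rfl hmem, Finset.sum_const, nsmul_eq_mul, Finset.card_powersetCard,
      Finset.card_univ, Fintype.card_fin]
    by_cases hd : d ≤ N
    · simp only [hd, if_true]
      have c1 : ((n.choose d : ℝ)) ≤ (n:ℝ)^d := by exact_mod_cast Nat.choose_le_pow n d
      have c2 : ((d:ℝ))^(2*N) ≤ (N:ℝ)^(2*N) := by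
        apply pow_le_pow_left₀ (by positivity)
        exact_mod_cast hd
      have c3 : (n:ℝ)^d * q^d ≤ (q*n)^N := by
        rw [← mul_pow]
        calc ((n:ℝ)*q)^d = (q*n)^d := by ring_nf
          _ ≤ (q*n)^N := pow_le_pow_right₀ hqn hd
      have hn0 : (0:ℝ) ≤ (n:ℝ)^d := by positivity
      calc (n.choose d : ℝ) * ((d:ℝ)^(2*N) * q^d)
          ≤ (n:ℝ)^d * ((N:ℝ)^(2*N) * q^d) := by
            apply mul_le_mul c1 (by apply mul_le_mul_of_nonneg_right c2 (by positivity)) (by positivity) hn0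
        _ = (N:ℝ)^(2*N) * ((n:ℝ)^d * q^d) := by ring
        _ ≤ (N:ℝ)^(2*N) * (q*n)^N := by
            apply mul_le_mul_of_nonneg_left c3 (by positivity)
    · simp [hd]
  calc ∑ d ∈ Finset.range ((univ : Finset (Fin n)).card + 1),
        (∑ s ∈ Finset.powersetCard d (univ : Finset (Fin n)),
          ((s.card : ℝ) ^ (2*N)) * (if s.card ≤ N then q ^ s.card else 0))
      ≤ ∑ d ∈ Finset.range ((univ : Finset (Fin n)).card + 1),
        (if d ≤ N then ((N:ℝ)^(2*N) * (q*n)^N) else 0) := Finset.sum_le_sum h3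
    _ ≤ (N+1) * (N:ℝ)^(2*N) * (q * n)^N := ?_
  rw [← Finset.sum_filter]
  rw [Finset.sum_const, nsmul_eq_mul]
  have hA : (0:ℝ) ≤ (N:ℝ)^(2*N) * (q*n)^N := by
    have : (0:ℝ) ≤ q * n := le_trans zero_le_one hqn
    positivity
  have hcard : ((Finset.range ((univ : Finset (Fin n)).card + 1)).filter (fun d => d ≤ N)).card ≤ N + 1 := by
    calc ((Finset.range ((univ : Finset (Fin n)).card + 1)).filter (fun d => d ≤ N)).card
        ≤ (Finset.range (N+1)).card := by
          apply Finset.card_le_card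
          intro d hd
          rw [Finset.mem_filter] at hd
          rw [Finset.mem_range]
          omega
      _ = N + 1 := Finset.card_range _
  calc (((Finset.range ((univ : Finset (Fin n)).card + 1)).filter (fun d => d ≤ N)).card : ℝ)
        * ((N:ℝ)^(2*N) * (q*n)^N)
      ≤ ((N:ℝ)+1) * ((N:ℝ)^(2*N) * (q*n)^N) := by
        apply mul_le_mul_of_nonneg_right _ hA
        exact_mod_cast hcard
    _ = ((N:ℝ)+1) * (N:ℝ)^(2*N) * (q*n)^N := by ring

section moment
variable {n N : ℕ} (p : ℝ)

/-- the complex "mu" factor -/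
noncomputable def mu (p : ℝ) (a : ℕ) : ℂ := (p:ℂ) * (1 - (p:ℂ))^a + (1 - (p:ℂ)) * (-(p:ℂ))^a

lemma mu_one : mu p 1 = 0 := by simp [mu]; ring

lemma norm_mu_le (hp0 : 0 ≤ p) (hp1 : p ≤ 1) {a : ℕ} (ha : 1 ≤ a) : ‖mu p a‖ ≤ 2 * p := by
  have : mu p a = ((p * (1-p)^a + (1-p) * (-p)^a : ℝ) : ℂ) := by push_cast [mu]; ring
  rw [this, Complex.norm_real]
  have h1p : (0:ℝ) ≤ 1 - p := by linarith
  have h1 : |p * (1-p)^a| ≤ p := by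
    have hp1' : (0:ℝ) ≤ (1-p)^a := by positivity
    rw [abs_of_nonneg (by positivity : (0:ℝ) ≤ p * (1-p)^a)]
    calc p * (1-p)^a ≤ p * 1 := by
          apply mul_le_mul_of_nonneg_left _ hp0
          exact pow_le_one₀ (by linarith) (by linarith)
      _ = p := mul_one p
  have h2 : |(1-p) * (-p)^a| ≤ p := by
    rw [abs_mul, abs_of_nonneg (by linarith : (0:ℝ) ≤ 1 - p), abs_pow, abs_neg,
      abs_of_nonneg hp0]
    calc (1-p) * p^a ≤ 1 * p^a := by
          apply mul_le_mul_of_nonneg_right (by linarith) (by positivity)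
      _ = p^a := one_mul _
      _ ≤ p^1 := pow_le_pow_of_le_one hp0 hp1 ha
      _ = p := pow_one p
  calc |p * (1-p)^a + (1-p) * (-p)^a| ≤ |p * (1-p)^a| + |(1-p) * (-p)^a| := abs_add_le _ _
    _ ≤ p + p := add_le_add h1 h2
    _ = 2 * p := by ring

lemma moment_le (hp0 : 0 ≤ p) (hp1 : p ≤ 1) (hpn : 1 ≤ 2*p*n)
    (w : Fin n → ℂ) (hw : ∀ k, ‖w k‖ ≤ 1) :
    ∑ S : Finset (Fin n), (∏ k : Fin n, if k ∈ S then p else 1 - p) *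
      ‖∑ k : Fin n, ((if k ∈ S then (1:ℂ) else 0) - (p:ℂ)) * w k‖ ^ (2*N)
    ≤ ((N:ℝ)+1) * (N:ℝ)^(2*N) * (2*p*n)^N := by
  classical
  set η : Fin n → Finset (Fin n) → ℂ := fun k S => (if k ∈ S then (1:ℂ) else 0) - (p:ℂ) with hη
  set X : Finset (Fin n) → ℂ := fun S => ∑ k : Fin n, η k S * w k with hX
  set wR : Finset (Fin n) → ℝ := fun S => ∏ k : Fin n, if k ∈ S then p else 1 - p with hwR
  have hwR0 : ∀ S, 0 ≤ wR S := fun S => Finset.prod_nonneg (fun k _ => by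
    by_cases h : k ∈ S <;> simp [h, hp0] <;> linarith)
  -- multiplicity
  set mult : ((Fin N ⊕ Fin N) → Fin n) → Fin n → ℕ :=
    fun τ j => ((univ : Finset (Fin N ⊕ Fin N)).filter (fun i => τ i = j)).card with hmult
  set Mu : ((Fin N ⊕ Fin N) → Fin n) → ℂ :=
    fun τ => ∏ j ∈ Finset.image τ univ, mu p (mult τ j) with hMu
  -- Step A : the complex identity
  have keyA : ∀ τ : (Fin N ⊕ Fin N) → Fin n,
      ∑ S : Finset (Fin n), ((wR S : ℂ)) * ∏ i : Fin N ⊕ Fin N, η (τ i) S = Mu τ := by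
    intro τ
    have h1 : ∀ S, (∏ i : Fin N ⊕ Fin N, η (τ i) S)
        = ∏ j ∈ Finset.image τ univ, (η j S) ^ (mult τ j) :=
      fun S => Finset.prod_comp (fun j => η j S) τ
    have h2 : ∀ S, ∀ j, (η j S) ^ (mult τ j)
        = if j ∈ S then (1 - (p:ℂ))^(mult τ j) else (-(p:ℂ))^(mult τ j) := by
      intro S j
      by_cases h : j ∈ S <;> simp [hη, h]
    have h3 : ∀ S, (wR S : ℂ) = ∏ k : Fin n, if k ∈ S then (p:ℂ) else 1 - (p:ℂ) := by
      intro S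
      rw [hwR]
      push_cast
      exact Finset.prod_congr rfl (fun k _ => by by_cases h : k ∈ S <;> simp [h])
    calc ∑ S : Finset (Fin n), ((wR S : ℂ)) * ∏ i : Fin N ⊕ Fin N, η (τ i) S
        = ∑ S : Finset (Fin n), (∏ k : Fin n, if k ∈ S then (p:ℂ) else 1 - (p:ℂ)) *
            ∏ j ∈ Finset.image τ univ,
              (if j ∈ S then (1 - (p:ℂ))^(mult τ j) else (-(p:ℂ))^(mult τ j)) := by
          refine Finset.sum_congr rfl (fun S _ => ?_)
          rw [h3 S, h1 S]
          congr 1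
          exact Finset.prod_congr rfl (fun j _ => h2 S j)
      _ = ∏ j ∈ Finset.image τ univ,
            ((p:ℂ) * (1 - (p:ℂ))^(mult τ j) + (1 - (p:ℂ)) * (-(p:ℂ))^(mult τ j)) :=
          indep_prod ((p:ℂ)) _ _ _
      _ = Mu τ := rfl

  -- Step B : norm of Mu is bounded by the counting weight
  have keyB : ∀ τ : (Fin N ⊕ Fin N) → Fin n,
      ‖Mu τ‖ ≤ (if (Finset.image τ univ).card ≤ N then (2*p) ^ (Finset.image τ univ).card else 0) := by
    intro τ
    by_cases hone : ∃ j ∈ Finset.image τ univ, mult τ j = 1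
    · obtain ⟨j, hj, h1⟩ := hone
      have hz : Mu τ = 0 := Finset.prod_eq_zero hj (by rw [h1]; exact mu_one p)
      rw [hz, norm_zero]
      split <;> positivity
    · push_neg at hone
      have hge : ∀ j ∈ Finset.image τ univ, 2 ≤ mult τ j := by
        intro j hj
        have h1 : 1 ≤ mult τ j := by
          rw [hmult]
          obtain ⟨i, -, hi⟩ := Finset.mem_image.mp hj
          exact Finset.card_pos.mpr ⟨i, Finset.mem_filter.mpr ⟨Finset.mem_univ i, hi⟩⟩
        have h2 := hone j hj
        omega
      have hsum : ∑ j ∈ Finset.image τ univ, mult τ j = 2*N := by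
        rw [hmult]
        have := Finset.card_eq_sum_card_fiberwise
          (f := τ) (s := (univ : Finset (Fin N ⊕ Fin N))) (t := Finset.image τ univ)
          (fun i _ => Finset.mem_image_of_mem τ (Finset.mem_univ i))
        rw [← this, Finset.card_univ, Fintype.card_sum, Fintype.card_fin]
        ring
      have hcard : (Finset.image τ univ).card ≤ N := by
        have h2 : 2 * (Finset.image τ univ).card ≤ ∑ j ∈ Finset.image τ univ, mult τ j := by
          calc 2 * (Finset.image τ univ).card = ∑ _j ∈ Finset.image τ univ, 2 := by
                rw [Finset.sum_const, smul_eq_mul, mul_comm]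
            _ ≤ ∑ j ∈ Finset.image τ univ, mult τ j := Finset.sum_le_sum hge
        rw [hsum] at h2
        omega
      rw [if_pos hcard]
      calc ‖Mu τ‖ = ∏ j ∈ Finset.image τ univ, ‖mu p (mult τ j)‖ := norm_prod _ _
        _ ≤ ∏ _j ∈ Finset.image τ univ, (2*p) :=
            Finset.prod_le_prod (fun j _ => norm_nonneg _)
              (fun j hj => norm_mu_le p hp0 hp1 (by have := hge j hj; omega))
        _ = (2*p) ^ (Finset.image τ univ).card := by
            rw [Finset.prod_const]
  -- Step C : expansion
  have conjη : ∀ k S, (starRingEnd ℂ) (η k S) = η k S := by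
    intro k S
    by_cases h : k ∈ S <;> simp [hη, h]
  have conjX : ∀ S, (starRingEnd ℂ) (X S) = ∑ k : Fin n, η k S * (starRingEnd ℂ) (w k) := by
    intro S
    rw [hX]
    simp only [map_sum, map_mul]
    exact Finset.sum_congr rfl (fun k _ => by rw [conjη])
  have expand : ∀ S : Finset (Fin n), (X S)^N * ((starRingEnd ℂ) (X S))^N
      = ∑ a : Fin N → Fin n, ∑ b : Fin N → Fin n,
          (((∏ i : Fin N, w (a i)) * (∏ i : Fin N, (starRingEnd ℂ) (w (b i))))
            * ∏ i : Fin N ⊕ Fin N, η ((Sum.elim a b) i) S) := by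
    intro S
    have e1 : (X S)^N = ∑ a : Fin N → Fin n, ∏ i : Fin N, (η (a i) S * w (a i)) := by
      rw [hX]; exact Fintype.sum_pow _ N
    have e2 : ((starRingEnd ℂ) (X S))^N
        = ∑ b : Fin N → Fin n, ∏ i : Fin N, (η (b i) S * (starRingEnd ℂ) (w (b i))) := by
      rw [conjX S]; exact Fintype.sum_pow _ N
    rw [e1, e2, Finset.sum_mul_sum]
    refine Finset.sum_congr rfl (fun a _ => Finset.sum_congr rfl (fun b _ => ?_))
    rw [Finset.prod_mul_distrib, Finset.prod_mul_distrib, Fintype.prod_sum_type]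
    simp only [Sum.elim_inl, Sum.elim_inr]
    ring
  -- Step D : the full complex identity
  have keyD : ((∑ S : Finset (Fin n), wR S * ‖X S‖^(2*N) : ℝ) : ℂ)
      = ∑ a : Fin N → Fin n, ∑ b : Fin N → Fin n,
          ((∏ i : Fin N, w (a i)) * (∏ i : Fin N, (starRingEnd ℂ) (w (b i))))
            * Mu (Sum.elim a b) := by
    have normpow : ∀ S : Finset (Fin n),
        ((‖X S‖^(2*N) : ℝ) : ℂ) = (X S)^N * ((starRingEnd ℂ) (X S))^N := by
      intro S
      rw [pow_mul, Complex.ofReal_pow, Complex.ofReal_pow, ← Complex.mul_conj', mul_pow]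
    calc ((∑ S : Finset (Fin n), wR S * ‖X S‖^(2*N) : ℝ) : ℂ)
        = ∑ S : Finset (Fin n), (wR S : ℂ) * ((X S)^N * ((starRingEnd ℂ) (X S))^N) := by
          push_cast
          refine Finset.sum_congr rfl (fun S _ => ?_)
          rw [← normpow S]
          push_cast
          ring
      _ = ∑ S : Finset (Fin n), ∑ a : Fin N → Fin n, ∑ b : Fin N → Fin n,
            ((∏ i : Fin N, w (a i)) * (∏ i : Fin N, (starRingEnd ℂ) (w (b i))))
              * ((wR S : ℂ) * ∏ i : Fin N ⊕ Fin N, η ((Sum.elim a b) i) S) := by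
          refine Finset.sum_congr rfl (fun S _ => ?_)
          rw [expand S, Finset.mul_sum]
          refine Finset.sum_congr rfl (fun a _ => ?_)
          rw [Finset.mul_sum]
          refine Finset.sum_congr rfl (fun b _ => ?_)
          ring
      _ = ∑ a : Fin N → Fin n, ∑ b : Fin N → Fin n, ∑ S : Finset (Fin n),
            ((∏ i : Fin N, w (a i)) * (∏ i : Fin N, (starRingEnd ℂ) (w (b i))))
              * ((wR S : ℂ) * ∏ i : Fin N ⊕ Fin N, η ((Sum.elim a b) i) S) := by
          rw [Finset.sum_comm]
          exact Finset.sum_congr rfl (fun a _ => Finset.sum_comm)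
      _ = ∑ a : Fin N → Fin n, ∑ b : Fin N → Fin n,
            ((∏ i : Fin N, w (a i)) * (∏ i : Fin N, (starRingEnd ℂ) (w (b i))))
              * Mu (Sum.elim a b) := by
          refine Finset.sum_congr rfl (fun a _ => Finset.sum_congr rfl (fun b _ => ?_))
          rw [← Finset.mul_sum, keyA (Sum.elim a b)]
  -- Step E : put everything together
  have hLHS0 : 0 ≤ ∑ S : Finset (Fin n), wR S * ‖X S‖^(2*N) :=
    Finset.sum_nonneg (fun S _ => mul_nonneg (hwR0 S) (by positivity))
  have hnorm : (∑ S : Finset (Fin n), wR S * ‖X S‖^(2*N))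
      = ‖((∑ S : Finset (Fin n), wR S * ‖X S‖^(2*N) : ℝ) : ℂ)‖ := by
    rw [Complex.norm_real]
    exact (abs_of_nonneg hLHS0).symm
  rw [hnorm, keyD]
  have hAle : ∀ a b : Fin N → Fin n,
      ‖(∏ i : Fin N, w (a i)) * (∏ i : Fin N, (starRingEnd ℂ) (w (b i)))‖ ≤ 1 := by
    intro a b
    rw [norm_mul, norm_prod, norm_prod]
    have p1 : ∏ i : Fin N, ‖w (a i)‖ ≤ 1 :=
      Finset.prod_le_one (fun i _ => norm_nonneg _) (fun i _ => hw _)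
    have p2 : ∏ i : Fin N, ‖(starRingEnd ℂ) (w (b i))‖ ≤ 1 :=
      Finset.prod_le_one (fun i _ => norm_nonneg _) (fun i _ => by rw [RCLike.norm_conj]; exact hw _)
    exact mul_le_one₀ p1 (Finset.prod_nonneg fun i _ => norm_nonneg _) p2
  calc ‖∑ a : Fin N → Fin n, ∑ b : Fin N → Fin n,
        ((∏ i : Fin N, w (a i)) * (∏ i : Fin N, (starRingEnd ℂ) (w (b i))))
          * Mu (Sum.elim a b)‖
      ≤ ∑ a : Fin N → Fin n, ∑ b : Fin N → Fin n, ‖Mu (Sum.elim a b)‖ := by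
        refine le_trans (norm_sum_le _ _) (Finset.sum_le_sum (fun a _ => ?_))
        refine le_trans (norm_sum_le _ _) (Finset.sum_le_sum (fun b _ => ?_))
        rw [norm_mul]
        calc ‖(∏ i : Fin N, w (a i)) * (∏ i : Fin N, (starRingEnd ℂ) (w (b i)))‖ * ‖Mu (Sum.elim a b)‖
            ≤ 1 * ‖Mu (Sum.elim a b)‖ :=
              mul_le_mul_of_nonneg_right (hAle a b) (norm_nonneg _)
          _ = ‖Mu (Sum.elim a b)‖ := one_mul _
    _ = ∑ τ : (Fin N ⊕ Fin N) → Fin n, ‖Mu τ‖ := by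
        rw [← Fintype.sum_prod_type
          (f := fun x : (Fin N → Fin n) × (Fin N → Fin n) => ‖Mu (Sum.elim x.1 x.2)‖)]
        exact Fintype.sum_equiv (Equiv.sumArrowEquivProdArrow (Fin N) (Fin N) (Fin n)).symm
          _ _ (fun x => rfl)
    _ ≤ ∑ τ : (Fin N ⊕ Fin N) → Fin n,
          (if (Finset.image τ univ).card ≤ N then (2*p) ^ (Finset.image τ univ).card else 0) :=
        Finset.sum_le_sum (fun τ _ => keyB τ)
    _ ≤ ((N:ℝ)+1) * (N:ℝ)^(2*N) * ((2*p) * n)^N :=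
        count_le (2*p) (by linarith) (by rw [mul_assoc] at hpn ⊢; exact hpn)
    _ = ((N:ℝ)+1) * (N:ℝ)^(2*N) * (2*p*n)^N := by rw [mul_assoc]


end moment


set_option maxHeartbeats 2000000 in
theorem stmt_15 (ε α θ C₁ : ℝ) (hε : 0 < ε) (hα : 0 < α) (hθ0 : 0 < θ) (hθ1 : θ < 1)
    (hC₁ : 1 ≤ C₁) (m : ℕ → ℕ)
    (hm : Filter.Tendsto (fun n : ℕ => (m n : ℝ) / (n : ℝ) ^ θ) Filter.atTop (nhds 1)) :
    ∃ C > 0, ∃ n₀ : ℕ, ∀ n ≥ n₀, ∀ z : Fin n → ℂ, (∀ k, ‖z k‖ = 1) →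
      (∀ ν : ℕ, 1 ≤ ν → ν ≤ ⌊α * (n : ℝ) ^ 2⌋₊ → ‖∑ k, z k ^ ν‖ ≤ C₁ * Real.sqrt n) →
      ∃ M₀ : Finset (Fin n), M₀.card = m n ∧
        ∀ ν : ℕ, 1 ≤ ν → ν ≤ ⌊α * (n : ℝ) ^ 2⌋₊ →
          ‖∑ k ∈ M₀, z k ^ ν‖ ≤ C * (m n : ℝ) ^ ((1 : ℝ) / 2 + ε) := by
  classical
  set ε' : ℝ := min ε 1 with hε'def
  have hε'0 : 0 < ε' := lt_min hε one_pos
  have hε'le : ε' ≤ ε := min_le_left _ _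
  have hε'1 : ε' ≤ 1 := min_le_right _ _
  set N : ℕ := ⌈1/(θ * ε')⌉₊ with hNdef
  have hθε : 0 < θ * ε' := mul_pos hθ0 hε'0
  have hN1 : 1 ≤ N := by
    have : 0 < N := by
      rw [hNdef]
      exact Nat.ceil_pos.mpr (by positivity)
    omega
  have hNR : (1:ℝ) ≤ (N:ℝ) := by exact_mod_cast hN1
  have hNpos : (0:ℝ) < (N:ℝ) := by linarith
  have hNinv : 1/(N:ℝ) ≤ θ * ε' := by
    have h1 : 1/(θ * ε') ≤ (N:ℝ) := Nat.le_ceil _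
    rw [div_le_iff₀ hNpos]
    rw [div_le_iff₀ hθε] at h1
    nlinarith
  set K : ℝ := ((N:ℝ)+1) * (N:ℝ)^(2*N) * 2^N with hKdef
  have hK1 : 1 ≤ K := by
    have h1 : (1:ℝ) ≤ (N:ℝ)+1 := by linarith
    have h2 : (1:ℝ) ≤ (N:ℝ)^(2*N) := one_le_pow₀ hNR
    have h3 : (1:ℝ) ≤ (2:ℝ)^N := one_le_pow₀ one_le_two
    calc (1:ℝ) = 1*1*1 := by ring
      _ ≤ ((N:ℝ)+1) * (N:ℝ)^(2*N) * 2^N := by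
          apply mul_le_mul (mul_le_mul h1 h2 zero_le_one (by linarith)) h3 zero_le_one
          nlinarith
  set C₅ : ℝ := max 1 (2*α*K) with hC₅def
  have hC₅1 : (1:ℝ) ≤ C₅ := le_max_left _ _
  refine ⟨4*C₅ + C₁, by linarith, ?_⟩
  -- eventual facts
  have ev1 : ∀ᶠ n : ℕ in atTop, (1:ℝ)/2 < (m n : ℝ) / (n:ℝ)^θ :=
    hm.eventually_const_lt (by norm_num)
  have ev2 : ∀ᶠ n : ℕ in atTop, (m n : ℝ) / (n:ℝ)^θ < 3/2 :=
    hm.eventually_lt_const (by norm_num)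
  have tendθ : Tendsto (fun n : ℕ => (n:ℝ)^θ) atTop atTop :=
    (tendsto_rpow_atTop hθ0).comp tendsto_natCast_atTop_atTop
  have ev3 : ∀ᶠ n : ℕ in atTop, (2:ℝ) ≤ (n:ℝ)^θ := tendθ.eventually_ge_atTop 2
  have tendθ' : Tendsto (fun n : ℕ => (n:ℝ)^(1-θ)) atTop atTop :=
    (tendsto_rpow_atTop (by linarith)).comp tendsto_natCast_atTop_atTop
  have ev4 : ∀ᶠ n : ℕ in atTop, (2:ℝ) ≤ (n:ℝ)^(1-θ) := tendθ'.eventually_ge_atTop 2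
  have tend2 : Tendsto (fun n : ℕ => α * (n:ℝ)^2) atTop atTop := by
    apply Filter.Tendsto.const_mul_atTop hα
    exact (tendsto_pow_atTop (by norm_num)).comp tendsto_natCast_atTop_atTop
  have ev5 : ∀ᶠ n : ℕ in atTop, (1:ℝ) ≤ α * (n:ℝ)^2 := tend2.eventually_ge_atTop 1
  have ev6 : ∀ᶠ n : ℕ in atTop, 1 ≤ n := eventually_ge_atTop 1
  obtain ⟨n₀, hn₀⟩ := Filter.eventually_atTop.mp
    (ev1.and (ev2.and (ev3.and (ev4.and (ev5.and ev6)))))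
  refine ⟨n₀, ?_⟩
  intro n hn z hz hzsum
  obtain ⟨h12, h32, h2θ, h21θ, hαn, hn1⟩ := hn₀ n hn
  have hnR : (1:ℝ) ≤ (n:ℝ) := by exact_mod_cast hn1
  have hnpos : (0:ℝ) < (n:ℝ) := by linarith
  have hnθpos : (0:ℝ) < (n:ℝ)^θ := Real.rpow_pos_of_pos hnpos θ
  have hmlow : (n:ℝ)^θ ≤ 2 * (m n) := by
    rw [lt_div_iff₀ hnθpos] at h12
    nlinarith
  have hmhi : (m n : ℝ) ≤ (3/2) * (n:ℝ)^θ := by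
    rw [div_lt_iff₀ hnθpos] at h32
    linarith
  have hm1R : (1:ℝ) ≤ (m n : ℝ) := by nlinarith
  have hm1 : 1 ≤ m n := by exact_mod_cast hm1R
  have hmpos : (0:ℝ) < (m n : ℝ) := by linarith
  have hmn : (m n : ℝ) < (n:ℝ) := by
    have hsplit : (n:ℝ) = (n:ℝ)^θ * (n:ℝ)^(1-θ) := by
      rw [← Real.rpow_add hnpos]
      norm_num
    have h5 : 2 * (n:ℝ)^θ ≤ (n:ℝ) := by
      calc 2 * (n:ℝ)^θ = (n:ℝ)^θ * 2 := by ring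
        _ ≤ (n:ℝ)^θ * (n:ℝ)^(1-θ) := mul_le_mul_of_nonneg_left h21θ (le_of_lt hnθpos)
        _ = (n:ℝ) := hsplit.symm
    linarith
  have hmnN : m n < n := by exact_mod_cast hmn
  have hmnle : (m n : ℝ) ≤ (n:ℝ) := le_of_lt hmn
  -- the sampling probability
  set p : ℝ := (m n : ℝ) / (n:ℝ) with hpdef
  have hppos : 0 < p := div_pos hmpos hnpos
  have hp0 : 0 ≤ p := le_of_lt hppos
  have hp1 : p ≤ 1 := by
    rw [hpdef, div_le_one hnpos]; exact hmnle
  have hplt : p < 1 := by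
    rw [hpdef, div_lt_one hnpos]; exact hmn
  have hpn : p * (n:ℝ) = (m n : ℝ) := div_mul_cancel₀ _ (ne_of_gt hnpos)
  have hpn2 : 1 ≤ 2*p*(n:ℝ) := by
    rw [mul_assoc, hpn]; linarith
  set V : ℕ := ⌊α * (n : ℝ) ^ 2⌋₊ with hVdef
  set wR : Finset (Fin n) → ℝ := fun S => ∏ k : Fin n, if k ∈ S then p else 1-p with hwRdef
  set X : (Fin n → ℂ) → Finset (Fin n) → ℂ :=
    fun w S => ∑ k : Fin n, ((if k ∈ S then (1:ℂ) else 0) - (p:ℂ)) * w k with hXdef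
  set T : Finset (Fin n) → ℝ := fun S =>
    (∑ ν ∈ Finset.Icc 1 V, ‖X (fun k => z k ^ ν) S‖^(2*N)) + ‖X (fun _ => 1) S‖^(2*N)
    with hTdef
  -- total weight is 1
  have hws : ∑ S : Finset (Fin n), wR S = 1 := by
    have h := indep_prod (R := ℝ) p (∅ : Finset (Fin n)) (fun _ => 1) (fun _ => 1)
    simpa using h
  have hwpos : ∀ S : Finset (Fin n), 0 < wR S := by
    intro S
    apply Finset.prod_pos
    intro k _
    by_cases h : k ∈ S <;> simp [h] <;> linarith
  -- expectation bound
  have hterm : ∀ (w : Fin n → ℂ), (∀ k, ‖w k‖ ≤ 1) →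
      ∑ S : Finset (Fin n), wR S * ‖X w S‖^(2*N) ≤ K * (m n : ℝ)^N := by
    intro w hw
    have h := moment_le (n := n) (N := N) p hp0 hp1 hpn2 w hw
    calc ∑ S : Finset (Fin n), wR S * ‖X w S‖^(2*N)
        ≤ ((N:ℝ)+1) * (N:ℝ)^(2*N) * (2*p*(n:ℝ))^N := h
      _ = K * (m n : ℝ)^N := by
          rw [mul_assoc 2 p (n:ℝ), hpn, hKdef, mul_pow]
          ring
  have hET : ∑ S : Finset (Fin n), wR S * T S ≤ ((V:ℝ)+1) * (K * (m n : ℝ)^N) := by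
    have hsplit : ∑ S : Finset (Fin n), wR S * T S
        = (∑ ν ∈ Finset.Icc 1 V, ∑ S : Finset (Fin n), wR S * ‖X (fun k => z k ^ ν) S‖^(2*N))
          + ∑ S : Finset (Fin n), wR S * ‖X (fun _ => 1) S‖^(2*N) := by
      rw [Finset.sum_comm, ← Finset.sum_add_distrib]
      refine Finset.sum_congr rfl (fun S _ => ?_)
      rw [hTdef]
      simp only [mul_add, Finset.mul_sum]
    rw [hsplit]
    have hbd1 : (∑ ν ∈ Finset.Icc 1 V, ∑ S : Finset (Fin n), wR S * ‖X (fun k => z k ^ ν) S‖^(2*N))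
        ≤ (V:ℝ) * (K * (m n : ℝ)^N) := by
      calc (∑ ν ∈ Finset.Icc 1 V, ∑ S : Finset (Fin n), wR S * ‖X (fun k => z k ^ ν) S‖^(2*N))
          ≤ ∑ _ν ∈ Finset.Icc 1 V, K * (m n : ℝ)^N := by
            refine Finset.sum_le_sum (fun ν _ => hterm _ (fun k => ?_))
            rw [norm_pow, hz k, one_pow]
        _ = (V:ℝ) * (K * (m n : ℝ)^N) := by
            rw [Finset.sum_const, nsmul_eq_mul, Nat.card_Icc]
            norm_num
    have hbd2 : ∑ S : Finset (Fin n), wR S * ‖X (fun _ => 1) S‖^(2*N) ≤ K * (m n : ℝ)^N := by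
      apply hterm
      intro k
      simp
    linarith
  -- existence of a good S₀
  set B : ℝ := ((V:ℝ)+1) * (K * (m n : ℝ)^N) with hBdef
  have hK0 : (0:ℝ) ≤ K := by linarith
  have hB0 : 0 ≤ B := by positivity
  have hex : ∃ S₀ : Finset (Fin n), T S₀ ≤ B := by
    by_contra hcon
    push_neg at hcon
    have hlt : ∑ S : Finset (Fin n), wR S * B < ∑ S : Finset (Fin n), wR S * T S := by
      apply Finset.sum_lt_sum_of_nonempty Finset.univ_nonempty
      intro S _
      exact mul_lt_mul_of_pos_left (hcon S) (hwpos S)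
    rw [← Finset.sum_mul, hws, one_mul] at hlt
    linarith
  obtain ⟨S₀, hS₀⟩ := hex
  -- extracting individual bounds
  set R : ℝ := B ^ (1/(2*(N:ℝ)) : ℝ) with hRdef
  have h2N : (0:ℝ) < 2*(N:ℝ) := by linarith
  have hroot : ∀ x : ℝ, 0 ≤ x → x^(2*N) ≤ B → x ≤ R := by
    intro x hx hxB
    have hxeq : x = (x^(2*N)) ^ (1/(2*(N:ℝ)) : ℝ) := by
      rw [← Real.rpow_natCast x (2*N), ← Real.rpow_mul hx]
      push_cast
      rw [mul_one_div, div_self (ne_of_gt h2N), Real.rpow_one]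
    rw [hxeq, hRdef]
    exact Real.rpow_le_rpow (by positivity) hxB (by positivity)
  have hXν : ∀ ν, 1 ≤ ν → ν ≤ V → ‖X (fun k => z k ^ ν) S₀‖ ≤ R := by
    intro ν h1 h2
    apply hroot _ (norm_nonneg _)
    calc ‖X (fun k => z k ^ ν) S₀‖^(2*N)
        ≤ ∑ ν' ∈ Finset.Icc 1 V, ‖X (fun k => z k ^ ν') S₀‖^(2*N) :=
          Finset.single_le_sum (f := fun ν' => ‖X (fun k => z k ^ ν') S₀‖^(2*N))
            (fun i _ => by positivity) (Finset.mem_Icc.mpr ⟨h1, h2⟩)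
      _ ≤ T S₀ := le_add_of_nonneg_right (by positivity)
      _ ≤ B := hS₀
  have hXc : |(S₀.card : ℝ) - (m n : ℝ)| ≤ R := by
    have hXcval : X (fun _ => 1) S₀ = Complex.ofReal ((S₀.card : ℝ) - (m n : ℝ)) := by
      rw [hXdef]
      simp only [mul_one]
      rw [Finset.sum_sub_distrib]
      have e1 : ∑ k : Fin n, (if k ∈ S₀ then (1:ℂ) else 0) = (S₀.card : ℂ) := by
        rw [Finset.sum_ite_mem, Finset.univ_inter, Finset.sum_const, nsmul_eq_mul, mul_one]
      have e2 : ∑ _k : Fin n, ((p:ℝ) : ℂ) = (((n:ℝ) * p : ℝ) : ℂ) := by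
        rw [Finset.sum_const, Finset.card_univ, Fintype.card_fin, nsmul_eq_mul]
        push_cast
        ring
      rw [e1, e2]
      have e3 : (n:ℝ) * p = (m n : ℝ) := by rw [mul_comm]; exact hpn
      rw [e3, Complex.ofReal_sub]
      push_cast
      ring
    apply hroot _ (abs_nonneg _)
    calc |(S₀.card : ℝ) - (m n : ℝ)|^(2*N)
        = ‖X (fun _ => 1) S₀‖^(2*N) := by
          rw [hXcval, Complex.norm_real, Real.norm_eq_abs]
      _ ≤ T S₀ := le_add_of_nonneg_left (Finset.sum_nonneg (fun i _ => by positivity))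
      _ ≤ B := hS₀
  -- build M₀ of exact cardinality m n
  have hMex : ∃ M₀ : Finset (Fin n), M₀.card = m n ∧
      ∀ ν : ℕ, ‖∑ k ∈ M₀, z k ^ ν‖ ≤ ‖∑ k ∈ S₀, z k ^ ν‖ + R := by
    have hnormsum : ∀ (s : Finset (Fin n)) (ν : ℕ), ‖∑ k ∈ s, z k ^ ν‖ ≤ (s.card : ℝ) := by
      intro s ν
      calc ‖∑ k ∈ s, z k ^ ν‖ ≤ ∑ k ∈ s, ‖z k ^ ν‖ := norm_sum_le _ _
        _ = (s.card : ℝ) := by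
            rw [Finset.sum_congr rfl (fun k _ => by rw [norm_pow, hz k, one_pow])]
            rw [Finset.sum_const, nsmul_eq_mul, mul_one]
    rcases le_total (m n) S₀.card with hc | hc
    · obtain ⟨M₀, hsub, hcard⟩ := Finset.exists_subset_card_eq hc
      refine ⟨M₀, hcard, fun ν => ?_⟩
      have hdecomp : ∑ k ∈ S₀ \ M₀, z k ^ ν + ∑ k ∈ M₀, z k ^ ν = ∑ k ∈ S₀, z k ^ ν :=
        Finset.sum_sdiff hsub
      have hcards : ((S₀ \ M₀).card : ℝ) = (S₀.card : ℝ) - (m n : ℝ) := by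
        rw [Finset.card_sdiff_of_subset hsub, hcard, Nat.cast_sub hc]
      calc ‖∑ k ∈ M₀, z k ^ ν‖ = ‖∑ k ∈ S₀, z k ^ ν - ∑ k ∈ S₀ \ M₀, z k ^ ν‖ := by
            rw [← hdecomp]; ring_nf
        _ ≤ ‖∑ k ∈ S₀, z k ^ ν‖ + ‖∑ k ∈ S₀ \ M₀, z k ^ ν‖ := norm_sub_le _ _
        _ ≤ ‖∑ k ∈ S₀, z k ^ ν‖ + R := by
            have h1 := hnormsum (S₀ \ M₀) ν
            have h2 : ((S₀ \ M₀).card : ℝ) ≤ R := by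
              rw [hcards]
              calc (S₀.card : ℝ) - (m n : ℝ) ≤ |(S₀.card : ℝ) - (m n : ℝ)| := le_abs_self _
                _ ≤ R := hXc
            linarith
    · obtain ⟨M₀, hsub, hcard⟩ := Finset.exists_superset_card_eq hc
        (by rw [Fintype.card_fin]; omega)
      refine ⟨M₀, hcard, fun ν => ?_⟩
      have hdecomp : ∑ k ∈ M₀ \ S₀, z k ^ ν + ∑ k ∈ S₀, z k ^ ν = ∑ k ∈ M₀, z k ^ ν :=
        Finset.sum_sdiff hsub
      have hcards : ((M₀ \ S₀).card : ℝ) = (m n : ℝ) - (S₀.card : ℝ) := by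
        rw [Finset.card_sdiff_of_subset hsub]
        have hc' : S₀.card ≤ M₀.card := Finset.card_le_card hsub
        rw [Nat.cast_sub hc', hcard]
      calc ‖∑ k ∈ M₀, z k ^ ν‖ = ‖∑ k ∈ S₀, z k ^ ν + ∑ k ∈ M₀ \ S₀, z k ^ ν‖ := by
            rw [← hdecomp]; ring_nf
        _ ≤ ‖∑ k ∈ S₀, z k ^ ν‖ + ‖∑ k ∈ M₀ \ S₀, z k ^ ν‖ := norm_add_le _ _
        _ ≤ ‖∑ k ∈ S₀, z k ^ ν‖ + R := by
            have h1 := hnormsum (M₀ \ S₀) ν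
            have h2 : ((M₀ \ S₀).card : ℝ) ≤ R := by
              rw [hcards]
              calc (m n : ℝ) - (S₀.card : ℝ) ≤ |(S₀.card : ℝ) - (m n : ℝ)| := by
                    rw [abs_sub_comm]; exact le_abs_self _
                _ ≤ R := hXc
            linarith
  obtain ⟨M₀, hMcard, hMle⟩ := hMex
  refine ⟨M₀, hMcard, ?_⟩
  intro ν hν1 hνV
  -- bound the S₀ sum
  have hXval : (∑ k ∈ S₀, z k ^ ν : ℂ)
      = X (fun k => z k ^ ν) S₀ + (p:ℂ) * ∑ k : Fin n, z k ^ ν := by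
    rw [hXdef]
    simp only [sub_mul, Finset.sum_sub_distrib]
    have e1 : ∑ k : Fin n, (if k ∈ S₀ then (1:ℂ) else 0) * z k ^ ν = ∑ k ∈ S₀, z k ^ ν := by
      calc ∑ k : Fin n, (if k ∈ S₀ then (1:ℂ) else 0) * z k ^ ν
          = ∑ k : Fin n, (if k ∈ S₀ then z k ^ ν else 0) :=
            Finset.sum_congr rfl (fun k _ => by by_cases h : k ∈ S₀ <;> simp [h])
        _ = ∑ k ∈ univ ∩ S₀, z k ^ ν := Finset.sum_ite_mem _ _ _
        _ = ∑ k ∈ S₀, z k ^ ν := by rw [Finset.univ_inter]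
    have e2 : ∑ k : Fin n, ((p:ℝ):ℂ) * z k ^ ν = ((p:ℝ):ℂ) * ∑ k : Fin n, z k ^ ν :=
      (Finset.mul_sum _ _ _).symm
    rw [e1, e2]
    ring
  have hsnpos : 0 < Real.sqrt n := Real.sqrt_pos.mpr hnpos
  have hpsqrt : p * Real.sqrt n ≤ Real.sqrt (m n) := by
    have hsn : Real.sqrt n * Real.sqrt n = (n:ℝ) := Real.mul_self_sqrt (le_of_lt hnpos)
    have hsm : Real.sqrt (m n) * Real.sqrt (m n) = (m n : ℝ) :=
      Real.mul_self_sqrt (le_of_lt hmpos)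
    have hsmn : Real.sqrt (m n) ≤ Real.sqrt n := Real.sqrt_le_sqrt hmnle
    rw [hpdef, div_mul_eq_mul_div, div_le_iff₀ hnpos]
    calc (m n : ℝ) * Real.sqrt n = (Real.sqrt (m n) * Real.sqrt (m n)) * Real.sqrt n := by
          rw [hsm]
      _ = Real.sqrt (m n) * (Real.sqrt (m n) * Real.sqrt n) := by ring
      _ ≤ Real.sqrt (m n) * (Real.sqrt n * Real.sqrt n) :=
          mul_le_mul_of_nonneg_left
            (mul_le_mul_of_nonneg_right hsmn (Real.sqrt_nonneg _)) (Real.sqrt_nonneg _)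
      _ = Real.sqrt (m n) * (n:ℝ) := by rw [hsn]
  have hS₀sum : ‖∑ k ∈ S₀, z k ^ ν‖ ≤ R + C₁ * Real.sqrt (m n) := by
    rw [hXval]
    calc ‖X (fun k => z k ^ ν) S₀ + ((p:ℝ):ℂ) * ∑ k : Fin n, z k ^ ν‖
        ≤ ‖X (fun k => z k ^ ν) S₀‖ + ‖((p:ℝ):ℂ) * ∑ k : Fin n, z k ^ ν‖ := norm_add_le _ _
      _ ≤ R + p * (C₁ * Real.sqrt n) := by
          have h1 : ‖X (fun k => z k ^ ν) S₀‖ ≤ R := hXν ν hν1 hνV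
          have h2 : ‖((p:ℝ):ℂ) * ∑ k : Fin n, z k ^ ν‖ ≤ p * (C₁ * Real.sqrt n) := by
            rw [norm_mul, Complex.norm_real, Real.norm_eq_abs, abs_of_nonneg hp0]
            exact mul_le_mul_of_nonneg_left (hzsum ν hν1 hνV) hp0
          linarith
      _ ≤ R + C₁ * Real.sqrt (m n) := by
          have h3 : p * (C₁ * Real.sqrt n) = C₁ * (p * Real.sqrt n) := by ring
          have h4 : C₁ * (p * Real.sqrt n) ≤ C₁ * Real.sqrt (m n) :=
            mul_le_mul_of_nonneg_left hpsqrt (by linarith)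
          linarith
  have hfinal1 : ‖∑ k ∈ M₀, z k ^ ν‖ ≤ 2*R + C₁ * Real.sqrt (m n) := by
    have h := hMle ν
    linarith
  -- numeric bound on R
  have hαK0 : (0:ℝ) ≤ 2*α*K := by positivity
  have hB' : B ≤ (2*α*K) * ((n:ℝ)^2 * (m n:ℝ)^N) := by
    have hV : (V:ℝ) ≤ α * (n:ℝ)^2 := Nat.floor_le (by positivity)
    have h1 : (V:ℝ) + 1 ≤ 2*(α * (n:ℝ)^2) := by linarith
    rw [hBdef]
    calc ((V:ℝ)+1) * (K * (m n:ℝ)^N) ≤ (2*(α*(n:ℝ)^2)) * (K * (m n:ℝ)^N) :=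
          mul_le_mul_of_nonneg_right h1 (by positivity)
      _ = (2*α*K) * ((n:ℝ)^2 * (m n:ℝ)^N) := by ring
  set e : ℝ := 1/(2*(N:ℝ)) with hedef
  have he0 : 0 < e := by positivity
  have he1 : e ≤ 1 := by
    rw [hedef, div_le_one h2N]
    linarith
  have piece1 : (2*α*K) ^ e ≤ C₅ := by
    rcases le_total (2*α*K) 1 with h | h
    · calc (2*α*K) ^ e ≤ 1 := Real.rpow_le_one hαK0 h (le_of_lt he0)
        _ ≤ C₅ := hC₅1
    · calc (2*α*K) ^ e ≤ (2*α*K) ^ (1:ℝ) := Real.rpow_le_rpow_of_exponent_le h he1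
        _ = 2*α*K := Real.rpow_one _
        _ ≤ C₅ := le_max_right _ _
  have hn2m : (n:ℝ) ≤ (2*(m n:ℝ)) ^ ((1:ℝ)/θ) := by
    have hb : (n:ℝ) = ((n:ℝ)^θ) ^ ((1:ℝ)/θ) := by
      rw [← Real.rpow_mul (le_of_lt hnpos), mul_one_div, div_self (ne_of_gt hθ0),
        Real.rpow_one]
    rw [hb]
    exact Real.rpow_le_rpow (le_of_lt hnθpos) hmlow (by positivity)
  set δ : ℝ := (1/θ) * (1/(N:ℝ)) with hδdef
  have hδ0 : 0 ≤ δ := by positivity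
  have hδε' : δ ≤ ε' := by
    rw [hδdef, show (1/θ)*(1/(N:ℝ)) = (1/(N:ℝ))/θ by ring, div_le_iff₀ hθ0]
    linarith [hNinv]
  have piece2 : ((n:ℝ)^2) ^ e ≤ 2 * (m n:ℝ) ^ ε := by
    have s1 : ((n:ℝ)^2) ^ e = (n:ℝ) ^ ((1:ℝ)/(N:ℝ)) := by
      rw [← Real.rpow_natCast (n:ℝ) 2, ← Real.rpow_mul (le_of_lt hnpos), hedef]
      norm_num
      rw [mul_one_div]
      congr 1
      field_simp
    have s2 : (n:ℝ) ^ ((1:ℝ)/(N:ℝ)) ≤ ((2*(m n:ℝ)) ^ ((1:ℝ)/θ)) ^ ((1:ℝ)/(N:ℝ)) :=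
      Real.rpow_le_rpow (le_of_lt hnpos) hn2m (by positivity)
    have s3 : ((2*(m n:ℝ)) ^ ((1:ℝ)/θ)) ^ ((1:ℝ)/(N:ℝ)) = (2*(m n:ℝ)) ^ δ := by
      rw [← Real.rpow_mul (by linarith : (0:ℝ) ≤ 2*(m n:ℝ)), hδdef]
    have s4 : (2*(m n:ℝ)) ^ δ = 2 ^ δ * (m n:ℝ) ^ δ :=
      Real.mul_rpow (by norm_num) (le_of_lt hmpos)
    have s5 : (2:ℝ) ^ δ ≤ 2 := by
      calc (2:ℝ) ^ δ ≤ 2 ^ (1:ℝ) :=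
            Real.rpow_le_rpow_of_exponent_le one_le_two (by linarith)
        _ = 2 := Real.rpow_one 2
    have s6 : (m n:ℝ) ^ δ ≤ (m n:ℝ) ^ ε :=
      Real.rpow_le_rpow_of_exponent_le hm1R (by linarith)
    calc ((n:ℝ)^2) ^ e = (n:ℝ) ^ ((1:ℝ)/(N:ℝ)) := s1
      _ ≤ (2*(m n:ℝ)) ^ δ := by rw [← s3]; exact s2
      _ = 2 ^ δ * (m n:ℝ) ^ δ := s4
      _ ≤ 2 * (m n:ℝ) ^ ε := by
          apply mul_le_mul s5 s6 (Real.rpow_nonneg (le_of_lt hmpos) δ) (by norm_num)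
  have piece3 : ((m n:ℝ)^N) ^ e = (m n:ℝ) ^ ((1:ℝ)/2) := by
    rw [← Real.rpow_natCast (m n:ℝ) N, ← Real.rpow_mul (le_of_lt hmpos), hedef]
    congr 1
    field_simp
  have hR : R ≤ C₅ * (2 * (m n:ℝ)^(ε:ℝ)) * (m n:ℝ)^((1:ℝ)/2) := by
    rw [hRdef]
    calc B ^ e ≤ ((2*α*K) * ((n:ℝ)^2 * (m n:ℝ)^N)) ^ e :=
          Real.rpow_le_rpow hB0 hB' (le_of_lt he0)
      _ = (2*α*K)^e * (((n:ℝ)^2)^e * ((m n:ℝ)^N)^e) := by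
          rw [Real.mul_rpow hαK0 (by positivity),
            Real.mul_rpow (x := (n:ℝ)^2) (y := ((m n:ℝ))^N) (by positivity) (by positivity)]
      _ ≤ C₅ * ((2 * (m n:ℝ)^(ε:ℝ)) * (m n:ℝ)^((1:ℝ)/2)) := by
          rw [piece3]
          apply mul_le_mul piece1 _ _ (by linarith)
          · apply mul_le_mul_of_nonneg_right piece2 (Real.rpow_nonneg (le_of_lt hmpos) _)
          · apply mul_nonneg (Real.rpow_nonneg (by positivity) _)
              (Real.rpow_nonneg (le_of_lt hmpos) _)
      _ = C₅ * (2 * (m n:ℝ)^(ε:ℝ)) * (m n:ℝ)^((1:ℝ)/2) := by ring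
  -- conclude
  have hsq : Real.sqrt (m n) = (m n:ℝ)^((1:ℝ)/2) := Real.sqrt_eq_rpow _
  have hmul : (m n:ℝ)^(ε:ℝ) * (m n:ℝ)^((1:ℝ)/2) = (m n:ℝ)^((1:ℝ)/2+ε) := by
    rw [← Real.rpow_add hmpos]
    ring_nf
  have hεge1 : (1:ℝ) ≤ (m n:ℝ)^(ε:ℝ) := by
    rw [← Real.rpow_zero (m n:ℝ)]
    exact Real.rpow_le_rpow_of_exponent_le hm1R (le_of_lt hε)
  have hmhalf0 : (0:ℝ) ≤ (m n:ℝ)^((1:ℝ)/2) := Real.rpow_nonneg (le_of_lt hmpos) _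
  calc ‖∑ k ∈ M₀, z k ^ ν‖ ≤ 2*R + C₁ * Real.sqrt (m n) := hfinal1
    _ ≤ 2*(C₅ * (2 * (m n:ℝ)^(ε:ℝ)) * (m n:ℝ)^((1:ℝ)/2))
        + C₁ * ((m n:ℝ)^(ε:ℝ) * (m n:ℝ)^((1:ℝ)/2)) := by
        have h1 : C₁ * Real.sqrt (m n) ≤ C₁ * ((m n:ℝ)^(ε:ℝ) * (m n:ℝ)^((1:ℝ)/2)) := by
          rw [hsq]
          apply mul_le_mul_of_nonneg_left _ (by linarith : (0:ℝ) ≤ C₁)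
          calc (m n:ℝ)^((1:ℝ)/2) = 1 * (m n:ℝ)^((1:ℝ)/2) := (one_mul _).symm
            _ ≤ (m n:ℝ)^(ε:ℝ) * (m n:ℝ)^((1:ℝ)/2) :=
              mul_le_mul_of_nonneg_right hεge1 hmhalf0
        linarith
    _ = (4*C₅) * ((m n:ℝ)^(ε:ℝ) * (m n:ℝ)^((1:ℝ)/2))
        + C₁ * ((m n:ℝ)^(ε:ℝ) * (m n:ℝ)^((1:ℝ)/2)) := by ring
    _ = (4*C₅ + C₁) * (m n:ℝ)^((1:ℝ)/2+ε) := by rw [hmul]; ring
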